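/- Fix ω₀ ∈ Ω. A finite set of gambles D = {f₁,…,fₙ} avoids sure loss if and only if there exists a function p : Ω∖{ω₀} → ℝ with p ≥ 0, Σ_{ω≠ω₀} p(ω) ≤ 1, and for every i, Σ_{ω≠ω₀} (fᵢ(ω₀) − fᵢ(ω)) p(ω) ≤ fᵢ(ω₀). -/

import Mathlib

open Finset

private lemma asl_key {Ω : Type*} [Fintype Ω] [DecidableEq Ω] [Nonempty Ω]
    (n : ℕ) (f : Fin n → Ω → ℝ) :
    (∀ lam : Fin n → ℝ, (∀ i, 0 ≤ lam i) → ∃ ω : Ω, 0 ≤ ∑ i, lam i * f i ω) ↔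
    (∃ q : Ω → ℝ, (∀ ω, 0 ≤ q ω) ∧ (∑ ω, q ω = 1) ∧ ∀ i, 0 ≤ ∑ ω, q ω * f i ω) := by
  constructor
  · intro h
    by_contra hq
    push_neg at hq
    set L : (Ω → ℝ) →ₗ[ℝ] (Fin n → ℝ) :=
      { toFun := fun q i => ∑ ω, q ω * f i ω,
        map_add' := by intro x y; funext i; simp [add_mul, Finset.sum_add_distrib],
        map_smul' := by intro c x; funext i; simp [Finset.mul_sum, mul_assoc] } with hL
    set C : Set (Fin n → ℝ) := L '' stdSimplex ℝ Ω with hC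
    set K : Set (Fin n → ℝ) := Set.univ.pi (fun _ : Fin n => Set.Ici (0:ℝ)) with hK
    have hCconv : Convex ℝ C := (convex_stdSimplex ℝ Ω).linear_image L
    have hCcomp : IsCompact C :=
      (isCompact_stdSimplex ℝ Ω).image L.continuous_of_finiteDimensional
    have hKconv : Convex ℝ K := convex_pi (fun i _ => convex_Ici 0)
    have hKcl : IsClosed K := isClosed_set_pi (fun i _ => isClosed_Ici)
    have hdisj : Disjoint C K := by
      rw [Set.disjoint_left]
      rintro x ⟨q, hqmem, rfl⟩ hxK
      obtain ⟨i, hi⟩ := hq q hqmem.1 hqmem.2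
      exact absurd (hxK i (Set.mem_univ i)) (by show ¬ (0:ℝ) ≤ ∑ ω, q ω * f i ω; exact not_le.mpr hi)
    obtain ⟨g, u, v, hgu, huv, hgv⟩ :=
      geometric_hahn_banach_compact_closed hCconv hCcomp hKconv hKcl hdisj
    have hv0 : v < 0 := by
      have h0K : (0 : Fin n → ℝ) ∈ K := by intro i _; simp
      have := hgv 0 h0K
      simpa using this
    set lam : Fin n → ℝ := fun i => g (Pi.single i (1:ℝ)) with hlam
    have hlamnn : ∀ i, 0 ≤ lam i := by
      intro i
      by_contra hneg
      push_neg at hneg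
      set c : ℝ := (v - 1) / lam i with hc
      have hc0 : 0 < c := div_pos_of_neg_of_neg (by linarith) hneg
      have hmem : c • (Pi.single i (1:ℝ) : Fin n → ℝ) ∈ K := by
        intro j _
        simp only [Pi.smul_apply, smul_eq_mul, Pi.single_apply]
        split <;> simp [le_of_lt hc0]
      have hlt := hgv _ hmem
      rw [map_smul, smul_eq_mul] at hlt
      have hlt2 : v < c * lam i := hlt
      rw [hc, div_mul_cancel₀ _ (ne_of_lt hneg)] at hlt2
      linarith
    have hgform : ∀ x : Fin n → ℝ, g x = ∑ i, x i * lam i := by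
      intro x
      conv_lhs => rw [← Finset.univ_sum_single x]
      rw [map_sum]
      refine Finset.sum_congr rfl fun i _ => ?_
      have hx : (Pi.single i (x i) : Fin n → ℝ) = x i • (Pi.single i (1:ℝ) : Fin n → ℝ) := by
        funext j
        simp only [Pi.smul_apply, smul_eq_mul, Pi.single_apply]
        split <;> ring
      rw [hx, map_smul, smul_eq_mul]
    obtain ⟨ω, hω⟩ := h lam hlamnn
    have hδ : (fun ω' => if ω' = ω then (1:ℝ) else 0) ∈ stdSimplex ℝ Ω := by
      constructor
      · intro ω'; dsimp; split <;> norm_num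
      · simp
    have hLδ : L (fun ω' => if ω' = ω then (1:ℝ) else 0) = fun i => f i ω := by
      funext i
      simp [hL, ite_mul]
    have hCδ := hgu _ ⟨_, hδ, rfl⟩
    rw [hLδ, hgform] at hCδ
    have hge : (0:ℝ) ≤ ∑ i, f i ω * lam i := by
      rw [show ∑ i, f i ω * lam i = ∑ i, lam i * f i ω from
        Finset.sum_congr rfl fun i _ => mul_comm _ _]
      exact hω
    linarith
  · rintro ⟨q, hq0, hq1, hqf⟩ lam hlam
    by_contra hcon
    push_neg at hcon
    have h1 : (0:ℝ) ≤ ∑ i, lam i * ∑ ω, q ω * f i ω :=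
      Finset.sum_nonneg fun i _ => mul_nonneg (hlam i) (hqf i)
    have h2 : ∑ i, lam i * ∑ ω, q ω * f i ω = ∑ ω, q ω * ∑ i, lam i * f i ω := by
      simp only [Finset.mul_sum]
      rw [Finset.sum_comm]
      exact Finset.sum_congr rfl fun ω _ => Finset.sum_congr rfl fun i _ => by ring
    have hne : ∃ ω : Ω, 0 < q ω := by
      by_contra hall
      push_neg at hall
      have hz : ∑ ω, q ω = 0 :=
        Finset.sum_eq_zero fun ω _ => le_antisymm (hall ω) (hq0 ω)
      rw [hq1] at hz; norm_num at hz
    obtain ⟨ω₁, hω₁⟩ := hne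
    have h3 : ∑ ω, q ω * ∑ i, lam i * f i ω < 0 := by
      have := Finset.sum_lt_sum (s := (Finset.univ : Finset Ω))
        (f := fun ω => q ω * ∑ i, lam i * f i ω) (g := fun _ => (0:ℝ))
        (fun ω _ => mul_nonpos_of_nonneg_of_nonpos (hq0 ω) (le_of_lt (hcon ω)))
        ⟨ω₁, Finset.mem_univ ω₁, mul_neg_of_pos_of_neg hω₁ (hcon ω₁)⟩
      simpa using this
    rw [h2] at h1; linarith

theorem avoids_sure_loss_iff_reduced_dual {Ω : Type*} [Fintype Ω] [DecidableEq Ω] [Nonempty Ω]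
    (ω₀ : Ω) (n : ℕ) (f : Fin n → Ω → ℝ) :
    (∀ lam : Fin n → ℝ, (∀ i, 0 ≤ lam i) →
      ∃ ω : Ω, 0 ≤ ∑ i, lam i * f i ω) ↔
    (∃ p : Ω → ℝ, (∀ ω, 0 ≤ p ω) ∧
      (∑ ω ∈ Finset.univ.erase ω₀, p ω ≤ 1) ∧
      ∀ i, ∑ ω ∈ Finset.univ.erase ω₀, (f i ω₀ - f i ω) * p ω ≤ f i ω₀) := by
  rw [asl_key]
  have hsplit : ∀ g : Ω → ℝ, ∑ ω, g ω = g ω₀ + ∑ ω ∈ Finset.univ.erase ω₀, g ω := by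
    intro g
    rw [← Finset.add_sum_erase _ g (Finset.mem_univ ω₀)]
  constructor
  · rintro ⟨q, hq0, hq1, hqf⟩
    refine ⟨q, hq0, ?_, ?_⟩
    · have h := hsplit q
      rw [hq1] at h
      have := hq0 ω₀
      linarith
    · intro i
      have h := hqf i
      rw [hsplit (fun ω => q ω * f i ω)] at h
      have hs : ∑ ω ∈ Finset.univ.erase ω₀, (f i ω₀ - f i ω) * q ω =
          f i ω₀ * ∑ ω ∈ Finset.univ.erase ω₀, q ω -
          ∑ ω ∈ Finset.univ.erase ω₀, q ω * f i ω := by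
        rw [Finset.mul_sum, ← Finset.sum_sub_distrib]
        exact Finset.sum_congr rfl fun ω _ => by ring
      have hq₀ : q ω₀ = 1 - ∑ ω ∈ Finset.univ.erase ω₀, q ω := by
        have := hsplit q; rw [hq1] at this; linarith
      rw [hs]
      rw [hq₀] at h
      nlinarith [h]
  · rintro ⟨p, hp0, hp1, hpf⟩
    set q : Ω → ℝ :=
      fun ω => if ω = ω₀ then 1 - ∑ ω' ∈ Finset.univ.erase ω₀, p ω' else p ω with hqdef
    have hq₀ : q ω₀ = 1 - ∑ ω' ∈ Finset.univ.erase ω₀, p ω' := by simp [hqdef]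
    have hqe : ∀ ω ∈ Finset.univ.erase ω₀, q ω = p ω := fun ω hω => by
      simp [hqdef, Finset.ne_of_mem_erase hω]
    refine ⟨q, ?_, ?_, ?_⟩
    · intro ω
      by_cases hωω : ω = ω₀
      · subst hωω; rw [hq₀]; linarith
      · rw [hqdef]; simp only [if_neg hωω]; exact hp0 ω
    · rw [hsplit q, hq₀, Finset.sum_congr rfl hqe]
      ring
    · intro i
      rw [hsplit (fun ω => q ω * f i ω)]
      have he : ∑ ω ∈ Finset.univ.erase ω₀, q ω * f i ω =
          ∑ ω ∈ Finset.univ.erase ω₀, p ω * f i ω :=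
        Finset.sum_congr rfl fun ω hω => by rw [hqe ω hω]
      have h := hpf i
      have hs : ∑ ω ∈ Finset.univ.erase ω₀, (f i ω₀ - f i ω) * p ω =
          f i ω₀ * ∑ ω ∈ Finset.univ.erase ω₀, p ω -
          ∑ ω ∈ Finset.univ.erase ω₀, p ω * f i ω := by
        rw [Finset.mul_sum, ← Finset.sum_sub_distrib]
        exact Finset.sum_congr rfl fun ω _ => by ring
      rw [hs] at h
      rw [he, hq₀]
      nlinarith
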